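/- arXiv:1309.2897 — 2 statements merged into one kernel-verified Lean document; each statement's English description precedes it below -/
import Mathlib

section
/- In the group U_3 of unitriangular automorphisms of the free group F_3, the subgroup generated by λ_{3,1} and λ_{3,2} is a normal subgroup of U_3 and is a free group of rank 2 (freely generated by λ_{3,1} and λ_{3,2}). -/
/-- The set of generators `f_j` of the free group on `Fin n` with index `j < i`. -/
def lowerGens {n : ℕ} (i : Fin n) : Set (FreeGroup (Fin n)) :=
  {g | ∃ j : Fin n, j < i ∧ g = FreeGroup.of j}

/-- An automorphism `φ` of the free group of rank `n` is *unitriangular* (w.r.t. the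
standard basis `f_1, …, f_n`) if for every `i` it sends `f_i` to `u_i * f_i` with
`u_i` in the subgroup generated by `f_1, …, f_{i-1}`.  (For `i = 1` this forces
`φ f_1 = f_1`.) -/
def IsUnitriangular {n : ℕ} (φ : MulAut (FreeGroup (Fin n))) : Prop :=
  ∀ i : Fin n, ∃ u ∈ Subgroup.closure (lowerGens i),
    φ (FreeGroup.of i) = u * FreeGroup.of i

/-- `IsLambda i j φ` says that `φ` is the automorphism `λ_{i,j}` of the free group,
sending the basis element `f_i` to `f_j * f_i` and fixing all other basis elements. -/
def IsLambda {n : ℕ} (i j : Fin n) (φ : MulAut (FreeGroup (Fin n))) : Prop :=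
  φ (FreeGroup.of i) = FreeGroup.of j * FreeGroup.of i ∧
    ∀ k : Fin n, k ≠ i → φ (FreeGroup.of k) = FreeGroup.of k


def alphaHom : FreeGroup (Fin 2) →* FreeGroup (Fin 3) :=
  FreeGroup.lift fun j => (FreeGroup.of (Fin.castSucc j))⁻¹

def gammaHom : FreeGroup (Fin 2) →* FreeGroup (Fin 3) :=
  FreeGroup.lift fun j => FreeGroup.of (Fin.castSucc j)

def ninvHom : FreeGroup (Fin 2) →* FreeGroup (Fin 2) :=
  FreeGroup.lift fun j => (FreeGroup.of j)⁻¹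

def betaHom : FreeGroup (Fin 3) →* FreeGroup (Fin 2) :=
  FreeGroup.lift fun i => if h : (i : ℕ) < 2 then (FreeGroup.of (⟨i, h⟩ : Fin 2))⁻¹ else 1

lemma beta_alpha (v : FreeGroup (Fin 2)) : betaHom (alphaHom v) = v := by
  have : betaHom.comp alphaHom = MonoidHom.id _ := by
    apply FreeGroup.ext_hom
    intro a
    fin_cases a <;> simp [alphaHom, betaHom]
  calc betaHom (alphaHom v) = (betaHom.comp alphaHom) v := rfl
    _ = v := by rw [this]; rfl

lemma alpha_inj : Function.Injective alphaHom :=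
  Function.LeftInverse.injective beta_alpha

lemma ninv_ninv (v : FreeGroup (Fin 2)) : ninvHom (ninvHom v) = v := by
  have : ninvHom.comp ninvHom = MonoidHom.id _ := by
    apply FreeGroup.ext_hom
    intro a
    simp [ninvHom]
  calc ninvHom (ninvHom v) = (ninvHom.comp ninvHom) v := rfl
    _ = v := by rw [this]; rfl

lemma alpha_ninv (v : FreeGroup (Fin 2)) : alphaHom (ninvHom v) = gammaHom v := by
  have : alphaHom.comp ninvHom = gammaHom := by
    apply FreeGroup.ext_hom
    intro a
    simp [ninvHom, alphaHom, gammaHom]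
  calc alphaHom (ninvHom v) = (alphaHom.comp ninvHom) v := rfl
    _ = gammaHom v := by rw [this]

lemma fix_closure (φ : MulAut (FreeGroup (Fin 3))) (s : Set (FreeGroup (Fin 3)))
    (h : ∀ x ∈ s, φ x = x) : ∀ x ∈ Subgroup.closure s, φ x = x := by
  intro x hx
  induction hx using Subgroup.closure_induction with
  | mem y hy => exact h y hy
  | one => exact map_one φ
  | mul y z _ _ hy hz => rw [map_mul, hy, hz]
  | inv y _ hy => rw [map_inv, hy]

lemma lowerGens0 : lowerGens (0 : Fin 3) = ∅ := by
  ext g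
  simp only [lowerGens, Set.mem_setOf_eq, Set.mem_empty_iff_false, iff_false]
  rintro ⟨j, hj, -⟩
  omega

lemma lowerGens1 : lowerGens (1 : Fin 3) = {FreeGroup.of (0 : Fin 3)} := by
  ext g
  simp only [lowerGens, Set.mem_setOf_eq, Set.mem_singleton_iff]
  constructor
  · rintro ⟨j, hj, rfl⟩
    have : j = 0 := by omega
    rw [this]
  · rintro rfl
    exact ⟨0, by decide, rfl⟩

lemma lowerGens2 : lowerGens (2 : Fin 3) = {FreeGroup.of (0 : Fin 3), FreeGroup.of 1} := by
  ext g
  simp only [lowerGens, Set.mem_setOf_eq, Set.mem_insert_iff, Set.mem_singleton_iff]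
  constructor
  · rintro ⟨j, hj, rfl⟩
    have : j = 0 ∨ j = 1 := by omega
    rcases this with rfl | rfl
    · exact Or.inl rfl
    · exact Or.inr rfl
  · rintro (rfl | rfl)
    · exact ⟨0, by decide, rfl⟩
    · exact ⟨1, by decide, rfl⟩

lemma gamma_range : gammaHom.range = Subgroup.closure {FreeGroup.of (0 : Fin 3), FreeGroup.of 1} := by
  rw [gammaHom, FreeGroup.range_lift_eq_closure]
  congr 1
  ext x
  constructor
  · rintro ⟨j, rfl⟩
    fin_cases j
    · exact Or.inl rfl
    · exact Or.inr rfl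
  · rintro (rfl | rfl)
    · exact ⟨0, rfl⟩
    · exact ⟨1, rfl⟩

/-- In `U_3`, the subgroup generated by `λ_{3,1}` and `λ_{3,2}` is normal and is a
free group of rank 2, freely generated by `λ_{3,1}` and `λ_{3,2}`: the canonical
homomorphism from the free group of rank 2 sending the two free generators to
`λ_{3,1}` and `λ_{3,2}` is injective and has the generated subgroup as its range. -/
theorem unitriangular_three_free_normal_subgroup
    (U : Subgroup (MulAut (FreeGroup (Fin 3))))
    (hU : ∀ φ, φ ∈ U ↔ IsUnitriangular φ)
    (l31 l32 : MulAut (FreeGroup (Fin 3)))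
    (h31 : IsLambda 2 0 l31) (h32 : IsLambda 2 1 l32)
    (m31 : l31 ∈ U) (m32 : l32 ∈ U) :
    (Subgroup.closure {(⟨l31, m31⟩ : U), ⟨l32, m32⟩}).Normal ∧
    Function.Injective
      (FreeGroup.lift (fun j : Fin 2 => if j = 0 then (⟨l31, m31⟩ : U) else ⟨l32, m32⟩)) ∧
    (FreeGroup.lift (fun j : Fin 2 => if j = 0 then (⟨l31, m31⟩ : U) else ⟨l32, m32⟩)).range
      = Subgroup.closure {⟨l31, m31⟩, ⟨l32, m32⟩} := by
  classical
  obtain ⟨h31e, h31f⟩ := h31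
  obtain ⟨h32e, h32f⟩ := h32
  set a : U := ⟨l31, m31⟩ with ha
  set b : U := ⟨l32, m32⟩ with hb
  set g : Fin 2 → U := (fun j : Fin 2 => if j = 0 then a else b) with hg
  set L : FreeGroup (Fin 2) →* U := FreeGroup.lift g with hL
  -- range of the generating family
  have hrange : Set.range g = {a, b} := by
    ext x
    constructor
    · rintro ⟨j, rfl⟩
      fin_cases j
      · exact Or.inl (by simp [hg])
      · exact Or.inr (by simp [hg])
    · rintro (rfl | rfl)
      · exact ⟨0, by simp [hg]⟩
      · exact ⟨1, by simp [hg]⟩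
  have hR : L.range = Subgroup.closure {a, b} := by
    rw [hL, FreeGroup.range_lift_eq_closure, hrange]
  have hL0 : ((L (FreeGroup.of 0) : U) : MulAut (FreeGroup (Fin 3))) = l31 := by
    rw [hL, FreeGroup.lift_apply_of]; simp [hg, ha]
  have hL1 : ((L (FreeGroup.of 1) : U) : MulAut (FreeGroup (Fin 3))) = l32 := by
    rw [hL, FreeGroup.lift_apply_of]; simp [hg, hb]
  have invfix : ∀ (φ : MulAut (FreeGroup (Fin 3))) (x : FreeGroup (Fin 3)),
      φ x = x → φ⁻¹ x = x := by
    intro φ x h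
    rw [MulAut.inv_def]
    conv_lhs => rw [← h]
    exact φ.symm_apply_apply x
  -- every element of the range fixes `of 0` and `of 1`
  have fix01 : ∀ w : FreeGroup (Fin 2),
      ((L w : U) : MulAut (FreeGroup (Fin 3))) (FreeGroup.of 0) = FreeGroup.of 0 ∧
      ((L w : U) : MulAut (FreeGroup (Fin 3))) (FreeGroup.of 1) = FreeGroup.of 1 := by
    intro w
    induction w using FreeGroup.induction_on with
    | C1 => simp
    | of j =>
      fin_cases j
      · constructor
        · show ((L (FreeGroup.of 0) : U) : MulAut (FreeGroup (Fin 3))) _ = _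
          rw [hL0]; exact h31f 0 (by decide)
        · show ((L (FreeGroup.of 0) : U) : MulAut (FreeGroup (Fin 3))) _ = _
          rw [hL0]; exact h31f 1 (by decide)
      · constructor
        · show ((L (FreeGroup.of 1) : U) : MulAut (FreeGroup (Fin 3))) _ = _
          rw [hL1]; exact h32f 0 (by decide)
        · show ((L (FreeGroup.of 1) : U) : MulAut (FreeGroup (Fin 3))) _ = _
          rw [hL1]; exact h32f 1 (by decide)
    | inv_of j ih =>
      rw [map_inv]
      constructor
      · exact invfix _ _ ih.1
      · exact invfix _ _ ih.2
    | mul x y ihx ihy =>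
      rw [map_mul]
      constructor
      · show ((L x : U) : MulAut (FreeGroup (Fin 3)))
          (((L y : U) : MulAut (FreeGroup (Fin 3))) (FreeGroup.of 0)) = _
        rw [ihy.1, ihx.1]
      · show ((L x : U) : MulAut (FreeGroup (Fin 3)))
          (((L y : U) : MulAut (FreeGroup (Fin 3))) (FreeGroup.of 1)) = _
        rw [ihy.2, ihx.2]
  -- automorphisms fixing `of 0`, `of 1` fix all values of `alphaHom`
  have hfixα : ∀ (φ : MulAut (FreeGroup (Fin 3))),
      φ (FreeGroup.of 0) = FreeGroup.of 0 → φ (FreeGroup.of 1) = FreeGroup.of 1 →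
      ∀ v, φ (alphaHom v) = alphaHom v := by
    intro φ h0 h1 v
    refine fix_closure φ {FreeGroup.of (0 : Fin 3), FreeGroup.of 1} ?_ _ ?_
    · rintro x (rfl | rfl)
      exacts [h0, h1]
    · rw [← gamma_range]
      exact ⟨ninvHom v, by rw [← alpha_ninv, ninv_ninv]⟩
  -- key computation of the action on `of 2`
  have key : ∀ w : FreeGroup (Fin 2),
      ((L w : U) : MulAut (FreeGroup (Fin 3))) (FreeGroup.of 2)
        = alphaHom w⁻¹ * FreeGroup.of 2 := by
    have inv_step : ∀ w : FreeGroup (Fin 2),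
        ((L w : U) : MulAut (FreeGroup (Fin 3))) (FreeGroup.of 2)
          = alphaHom w⁻¹ * FreeGroup.of 2 →
        ((L w⁻¹ : U) : MulAut (FreeGroup (Fin 3))) (FreeGroup.of 2)
          = alphaHom w * FreeGroup.of 2 := by
      intro w hw
      apply ((L w : U) : MulAut (FreeGroup (Fin 3))).injective
      have h1 : ((L w : U) : MulAut (FreeGroup (Fin 3)))
          (((L w⁻¹ : U) : MulAut (FreeGroup (Fin 3))) (FreeGroup.of 2)) = FreeGroup.of 2 := by
        rw [← MulAut.mul_apply, ← MulMemClass.coe_mul, ← map_mul, mul_inv_cancel, map_one]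
        rfl
      rw [h1, map_mul, hw, hfixα _ (fix01 w).1 (fix01 w).2, map_inv, ← mul_assoc,
        mul_inv_cancel, one_mul]
    intro w
    induction w using FreeGroup.induction_on with
    | C1 => simp
    | of j =>
      have hpure : (pure j : FreeGroup (Fin 2)) = FreeGroup.of j := rfl
      rw [map_inv]
      have hα : alphaHom (FreeGroup.of j) = (FreeGroup.of (Fin.castSucc j))⁻¹ :=
        FreeGroup.lift_apply_of
      rw [hα, inv_inv]
      fin_cases j
      · show ((L (FreeGroup.of 0) : U) : MulAut (FreeGroup (Fin 3))) (FreeGroup.of 2)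
            = FreeGroup.of (0 : Fin 3) * FreeGroup.of 2
        rw [hL0]; exact h31e
      · show ((L (FreeGroup.of 1) : U) : MulAut (FreeGroup (Fin 3))) (FreeGroup.of 2)
            = FreeGroup.of (1 : Fin 3) * FreeGroup.of 2
        rw [hL1]; exact h32e
    | inv_of j ih => exact inv_step _ ih
    | mul x y ihx ihy =>
      rw [map_mul]
      show ((L x : U) : MulAut (FreeGroup (Fin 3)))
        (((L y : U) : MulAut (FreeGroup (Fin 3))) (FreeGroup.of 2)) = _
      rw [ihy, map_mul, hfixα _ (fix01 x).1 (fix01 x).2, ihx, mul_inv_rev, map_mul, mul_assoc]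
  -- injectivity
  have hinj : Function.Injective L := by
    rw [injective_iff_map_eq_one]
    intro w hw
    have h3 := key w
    rw [hw] at h3
    have h4 : (FreeGroup.of (2 : Fin 3)) = alphaHom w⁻¹ * FreeGroup.of 2 := by
      simpa using h3
    have h5 : alphaHom w⁻¹ = 1 := right_eq_mul.mp h4
    have h6 : w⁻¹ = 1 := alpha_inj (by rw [h5, map_one])
    rwa [inv_eq_one] at h6
  -- elements of `U` fix `of 0`
  have ufix0 : ∀ χ : U, (χ : MulAut (FreeGroup (Fin 3))) (FreeGroup.of 0) = FreeGroup.of 0 := by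
    intro χ
    obtain ⟨u, hu, h⟩ := (hU χ.1).mp χ.2 0
    rw [lowerGens0, Subgroup.closure_empty, Subgroup.mem_bot] at hu
    rw [h, hu, one_mul]
  -- membership characterization of the closure
  have memH_iff : ∀ φ : U, φ ∈ Subgroup.closure {a, b} ↔
      ((φ : MulAut (FreeGroup (Fin 3))) (FreeGroup.of 0) = FreeGroup.of 0 ∧
        (φ : MulAut (FreeGroup (Fin 3))) (FreeGroup.of 1) = FreeGroup.of 1) := by
    intro φ
    constructor
    · intro h
      rw [← hR] at h
      obtain ⟨w, rfl⟩ := h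
      exact fix01 w
    · rintro ⟨h0, h1⟩
      obtain ⟨u, hu, h2⟩ := (hU φ.1).mp φ.2 2
      rw [lowerGens2, ← gamma_range] at hu
      obtain ⟨v, rfl⟩ := hu
      rw [← hR]
      refine ⟨(ninvHom v)⁻¹, ?_⟩
      have hval3 : ((L ((ninvHom v)⁻¹) : U) : MulAut (FreeGroup (Fin 3))) (FreeGroup.of 2)
          = gammaHom v * FreeGroup.of 2 := by
        rw [key, inv_inv, alpha_ninv]
      apply Subtype.ext
      apply MulEquiv.toMonoidHom_injective
      apply FreeGroup.ext_hom
      intro i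
      fin_cases i
      · exact ((fix01 _).1).trans h0.symm
      · exact ((fix01 _).2).trans h1.symm
      · exact hval3.trans h2.symm
  -- normality
  have hnormal : (Subgroup.closure {a, b}).Normal := by
    constructor
    intro φ hφ ψ
    rw [memH_iff] at hφ ⊢
    obtain ⟨h0, h1⟩ := hφ
    obtain ⟨u, hu, e1⟩ := (hU ψ.1).mp ψ.2 1
    rw [lowerGens1] at hu
    have fixu : ∀ χ : U, (χ : MulAut (FreeGroup (Fin 3))) u = u := fun χ =>
      fix_closure (χ : MulAut (FreeGroup (Fin 3))) _ (by rintro x rfl; exact ufix0 χ) u hu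
    have fixuφ : φ.1 u = u := fix_closure φ.1 _
      (by rintro x rfl; exact h0) u hu
    have eψinv : ((ψ⁻¹ : U) : MulAut (FreeGroup (Fin 3))) (FreeGroup.of 1)
        = u⁻¹ * FreeGroup.of 1 := by
      apply (ψ : MulAut (FreeGroup (Fin 3))).injective
      have hid : ((ψ : U) : MulAut (FreeGroup (Fin 3)))
          (((ψ⁻¹ : U) : MulAut (FreeGroup (Fin 3))) (FreeGroup.of 1)) = FreeGroup.of 1 := by
        rw [← MulAut.mul_apply, ← MulMemClass.coe_mul, mul_inv_cancel]
        rfl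
      rw [hid, map_mul, map_inv, fixu ψ, e1, ← mul_assoc, inv_mul_cancel, one_mul]
    have coe3 : ((ψ * φ * ψ⁻¹ : U) : MulAut (FreeGroup (Fin 3)))
        = (ψ : MulAut (FreeGroup (Fin 3))) * (φ : MulAut (FreeGroup (Fin 3)))
          * ((ψ⁻¹ : U) : MulAut (FreeGroup (Fin 3))) := by
      push_cast
      rfl
    constructor
    · rw [coe3, MulAut.mul_apply, MulAut.mul_apply, ufix0 ψ⁻¹, h0, ufix0 ψ]
    · rw [coe3, MulAut.mul_apply, MulAut.mul_apply, eψinv, map_mul, map_inv, fixuφ, h1,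
        map_mul, map_inv, fixu ψ, e1, ← mul_assoc, inv_mul_cancel, one_mul]
  exact ⟨hnormal, hinj, hR⟩
end

section
/- Let U_3 be the group of unitriangular automorphisms of the free group F_3. Then U_3 is isomorphic to the one-relator group presented by ⟨a, b | [[a, b], b] = 1⟩, where an isomorphism sends a to λ_{3,2} and b to λ_{2,1} (commutators taken with the convention [g, f] = g f g^{-1} f^{-1}). -/
open scoped commutatorElement

lemma conj_comm_aux {H : Type*} [Group H] (a b : H) (h : ⁅a, b⁆ * b = b * ⁅a, b⁆) :
    b * (a⁻¹ * ⁅a, b⁆ * a) * b⁻¹ = a⁻¹ * ⁅a, b⁆ * a := by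
  set c := ⁅a, b⁆ with hc
  have hcd : c = a * b * a⁻¹ * b⁻¹ := commutatorElement_def a b
  have h1 : b * c * b⁻¹ = c := by rw [← h]; group
  have h2 : a * b * a⁻¹ = c * b := by rw [hcd]; group
  calc b * (a⁻¹ * c * a) * b⁻¹
      = a⁻¹ * ((a * b * a⁻¹) * c * (a * b * a⁻¹)⁻¹) * a := by group
    _ = a⁻¹ * ((c * b) * c * (c * b)⁻¹) * a := by rw [h2]
    _ = a⁻¹ * (c * (b * c * b⁻¹) * c⁻¹) * a := by group
    _ = a⁻¹ * (c * c * c⁻¹) * a := by rw [h1]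
    _ = a⁻¹ * c * a := by group


namespace UT3
abbrev M := FreeGroup (Fin 3)
abbrev F := FreeGroup Bool

def f0 : M := FreeGroup.of 0
def f1 : M := FreeGroup.of 1
def f2 : M := FreeGroup.of 2
def xx : F := FreeGroup.of false
def yy : F := FreeGroup.of true

def iot : F →* M := FreeGroup.lift (fun t => if t then f1 else f0)
@[simp] lemma iot_x : iot xx = f0 := by simp [iot, xx]
@[simp] lemma iot_y : iot yy = f1 := by simp [iot, yy]
def retr : M →* F := FreeGroup.lift (fun i => if i = 0 then xx else if i = 1 then yy else 1)
lemma iot_inj : Function.Injective iot := by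
  have h : retr.comp iot = MonoidHom.id F := by
    apply FreeGroup.ext_hom
    intro a
    cases a <;> simp [iot, retr, xx, yy, f0, f1]
  intro u v huv
  have := congrArg retr huv
  calc u = retr.comp iot u := by rw [h]; rfl
  _ = retr.comp iot v := this
  _ = v := by rw [h]; rfl

def betaf : F →* F := FreeGroup.lift (fun t => if t then xx * yy else xx)
def betag : F →* F := FreeGroup.lift (fun t => if t then xx⁻¹ * yy else xx)
def beta : F ≃* F :=
  MonoidHom.toMulEquiv betaf betag
    (by apply FreeGroup.ext_hom; intro a; cases a <;> simp [betaf, betag, xx, yy])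
    (by apply FreeGroup.ext_hom; intro a; cases a <;> simp [betaf, betag, xx, yy])
@[simp] lemma beta_x : beta xx = xx := by simp [beta, betaf, xx]
@[simp] lemma beta_y : beta yy = xx * yy := by simp [beta, betaf, yy]
lemma beta_inv_eq : (beta⁻¹ : MulAut F) = beta.symm := rfl
@[simp] lemma beta_inv_x : beta⁻¹ xx = xx := by
  rw [beta_inv_eq]; simp [beta, betag, xx]
@[simp] lemma beta_inv_y : beta⁻¹ yy = xx⁻¹ * yy := by
  rw [beta_inv_eq]; simp [beta, betag, yy]

def phiK : Multiplicative ℤ →* MulAut F := zpowersHom _ beta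
abbrev K := SemidirectProduct F (Multiplicative ℤ) phiK

@[simp] lemma phiK_one (w : F) : phiK (Multiplicative.ofAdd 1) w = beta w := by
  simp [phiK, zpowersHom_apply]

/-- the presented group -/
abbrev rels : Set (FreeGroup Bool) :=
  {⁅⁅FreeGroup.of true, FreeGroup.of false⁆, FreeGroup.of false⁆}
abbrev G := PresentedGroup rels

def ga : G := PresentedGroup.of true
def gb : G := PresentedGroup.of false

lemma grel : ⁅⁅ga, gb⁆, gb⁆ = 1 := by
  have : (⁅⁅FreeGroup.of true, FreeGroup.of false⁆, FreeGroup.of false⁆ : FreeGroup Bool)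
      ∈ Subgroup.normalClosure rels := Subgroup.subset_normalClosure rfl
  have h : PresentedGroup.mk rels
      ⁅⁅FreeGroup.of true, FreeGroup.of false⁆, FreeGroup.of false⁆ = 1 :=
    (QuotientGroup.eq_one_iff _).mpr this
  rw [map_commutatorElement, map_commutatorElement] at h
  exact h

lemma gcomm : ⁅ga, gb⁆ * gb = gb * ⁅ga, gb⁆ :=
  commutatorElement_eq_one_iff_mul_comm.mp grel

end UT3
namespace UT3
open SemidirectProduct

def AA : K := SemidirectProduct.inl yy⁻¹
def BB : K := SemidirectProduct.inr (Multiplicative.ofAdd 1)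

lemma hAinv : AA⁻¹ = SemidirectProduct.inl yy := by
  rw [AA, ← map_inv, inv_inv]

lemma hAB : ⁅AA, BB⁆ = SemidirectProduct.inl (yy⁻¹ * (xx * yy)) := by
  calc ⁅AA, BB⁆ = AA * (BB * SemidirectProduct.inl yy * BB⁻¹) := by
        rw [commutatorElement_def, hAinv]; group
    _ = AA * SemidirectProduct.inl (phiK (Multiplicative.ofAdd 1) yy) := by
        rw [BB, ← map_inv, ← SemidirectProduct.inl_aut]
    _ = SemidirectProduct.inl (yy⁻¹ * (xx * yy)) := by
        rw [phiK_one, beta_y, AA, ← map_mul]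

lemma beta_v : beta (yy⁻¹ * (xx * yy)) = yy⁻¹ * (xx * yy) := by
  simp only [map_mul, map_inv, beta_x, beta_y]
  group

lemma hrelK : ⁅⁅AA, BB⁆, BB⁆ = 1 := by
  rw [hAB]
  calc ⁅SemidirectProduct.inl (yy⁻¹ * (xx * yy)), BB⁆
      = SemidirectProduct.inl (yy⁻¹ * (xx * yy)) *
        (BB * SemidirectProduct.inl (yy⁻¹ * (xx * yy))⁻¹ * BB⁻¹) := by
        rw [commutatorElement_def, ← map_inv]; group
    _ = SemidirectProduct.inl (yy⁻¹ * (xx * yy)) *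
        SemidirectProduct.inl (phiK (Multiplicative.ofAdd 1) (yy⁻¹ * (xx * yy))⁻¹) := by
        rw [BB, ← map_inv, ← SemidirectProduct.inl_aut]
    _ = 1 := by
        rw [phiK_one, map_inv, beta_v, ← map_mul, mul_inv_cancel, map_one]

/-- the hom `G →* K` -/
def Theta1 : G →* K :=
  PresentedGroup.toGroup (f := fun t => if t then AA else BB) (by
    intro r hr
    rw [Set.mem_singleton_iff] at hr
    subst hr
    rw [map_commutatorElement, map_commutatorElement]
    simpa using hrelK)

@[simp] lemma Theta1_a : Theta1 ga = AA := by simp [Theta1, ga]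
@[simp] lemma Theta1_b : Theta1 gb = BB := by simp [Theta1, gb]

/-- the hom `F →* G` underlying `Theta2` -/
def th2f : F →* G := FreeGroup.lift (fun t => if t then ga⁻¹ else ga⁻¹ * ⁅ga, gb⁆ * ga)

@[simp] lemma th2f_y : th2f yy = ga⁻¹ := by simp [th2f, yy]
@[simp] lemma th2f_x : th2f xx = ga⁻¹ * ⁅ga, gb⁆ * ga := by simp [th2f, xx]

lemma Q1 (w : F) : th2f (beta w) = gb * th2f w * gb⁻¹ := by
  have h : th2f.comp beta.toMonoidHom = (MulAut.conj gb).toMonoidHom.comp th2f := by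
    apply FreeGroup.ext_hom
    intro t
    cases t
    · show th2f (beta xx) = MulAut.conj gb (th2f xx)
      rw [beta_x, th2f_x, MulAut.conj_apply]
      exact (conj_comm_aux ga gb gcomm).symm
    · show th2f (beta yy) = MulAut.conj gb (th2f yy)
      rw [beta_y, map_mul, th2f_x, th2f_y, MulAut.conj_apply, commutatorElement_def]
      group
  have := DFunLike.congr_fun h w
  simpa using this

lemma Q1' (w : F) : th2f (beta⁻¹ w) = gb⁻¹ * th2f w * gb := by
  have := Q1 (beta⁻¹ w)
  have h2 : beta ((beta⁻¹ : MulAut F) w) = w := by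
    rw [beta_inv_eq]; exact beta.apply_symm_apply w
  rw [h2] at this
  rw [this]; group

lemma Qn (n : ℤ) : ∀ w : F,
    th2f ((beta ^ n : MulAut F) w) = gb ^ n * th2f w * (gb ^ n)⁻¹ := by
  induction n using Int.induction_on with
  | zero => intro w; simp
  | succ k ih =>
    intro w
    have hsplit : (beta ^ ((k : ℤ) + 1) : MulAut F) w
        = (beta ^ (k : ℤ) : MulAut F) (beta w) := by
      rw [zpow_add_one]; rfl
    rw [hsplit, ih (beta w), Q1, zpow_add_one]
    group
  | pred k ih =>
    intro w
    have hsplit : (beta ^ (-(k : ℤ) - 1) : MulAut F) w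
        = (beta ^ (-(k : ℤ)) : MulAut F) (beta⁻¹ w) := by
      rw [zpow_sub_one]; rfl
    rw [hsplit, ih (beta⁻¹ w), Q1', zpow_sub_one]
    group

end UT3
namespace UT3
open SemidirectProduct

lemma compat2 : ∀ m : Multiplicative ℤ,
    th2f.comp (phiK m).toMonoidHom
      = (MulAut.conj (zpowersHom G gb m)).toMonoidHom.comp th2f := by
  intro m
  apply MonoidHom.ext
  intro w
  show th2f (phiK m w) = MulAut.conj (zpowersHom G gb m) (th2f w)
  rw [MulAut.conj_apply]
  exact Qn m.toAdd w

def Theta2 : K →* G := SemidirectProduct.lift th2f (zpowersHom G gb) compat2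

@[simp] lemma Theta2_inl (w : F) : Theta2 (SemidirectProduct.inl w) = th2f w := by
  simp [Theta2]

@[simp] lemma Theta2_B : Theta2 BB = gb := by
  simp [Theta2, BB, zpowersHom_apply]

lemma e1comp1 : Theta2.comp Theta1 = MonoidHom.id G := by
  apply PresentedGroup.ext
  intro t
  cases t
  · show Theta2 (Theta1 gb) = gb
    rw [Theta1_b, Theta2_B]
  · show Theta2 (Theta1 ga) = ga
    rw [Theta1_a]
    show Theta2 (SemidirectProduct.inl yy⁻¹) = ga
    rw [Theta2_inl, map_inv, th2f_y, inv_inv]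

lemma e1comp2 : Theta1.comp Theta2 = MonoidHom.id K := by
  apply SemidirectProduct.hom_ext
  · apply FreeGroup.ext_hom
    intro t
    cases t
    · show Theta1 (Theta2 (SemidirectProduct.inl xx)) = SemidirectProduct.inl xx
      rw [Theta2_inl, th2f_x, map_mul, map_mul, map_inv, Theta1_a, map_commutatorElement,
        Theta1_a, Theta1_b, hAB, hAinv, AA, ← map_mul, ← map_mul]
      congr 1
      group
    · show Theta1 (Theta2 (SemidirectProduct.inl yy)) = SemidirectProduct.inl yy
      rw [Theta2_inl, th2f_y, map_inv, Theta1_a, hAinv]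
  · apply MonoidHom.ext_mint
    show Theta1 (Theta2 BB) = BB
    rw [Theta2_B, Theta1_b]

def e1 : G ≃* K := MonoidHom.toMulEquiv Theta1 Theta2 e1comp1 e1comp2

@[simp] lemma e1_a : e1 ga = AA := Theta1_a
@[simp] lemma e1_b : e1 gb = BB := Theta1_b

end UT3
namespace UT3

section Uside

variable {l32 l21 : MulAut (FreeGroup (Fin 3))}

/-- extensionality for automorphisms of the free group -/
lemma autext {φ ψ : MulAut M} (h : ∀ i : Fin 3, φ (FreeGroup.of i) = ψ (FreeGroup.of i)) :
    φ = ψ :=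
  MulEquiv.toMonoidHom_injective (FreeGroup.ext_hom _ _ h)

lemma inv_app (φ : MulAut M) {g h' : M} (hg : φ g = h') : φ⁻¹ h' = g := by
  rw [← hg, MulAut.inv_def]
  exact φ.symm_apply_apply g

lemma l32_0 (h32 : IsLambda 2 1 l32) : l32 f0 = f0 := h32.2 0 (by decide)
lemma l32_1 (h32 : IsLambda 2 1 l32) : l32 f1 = f1 := h32.2 1 (by decide)
lemma l32_2 (h32 : IsLambda 2 1 l32) : l32 f2 = f1 * f2 := h32.1
lemma l21_0 (h21 : IsLambda 1 0 l21) : l21 f0 = f0 := h21.2 0 (by decide)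
lemma l21_1 (h21 : IsLambda 1 0 l21) : l21 f1 = f0 * f1 := h21.1
lemma l21_2 (h21 : IsLambda 1 0 l21) : l21 f2 = f2 := h21.2 2 (by decide)

lemma l32i_0 (h32 : IsLambda 2 1 l32) : l32⁻¹ f0 = f0 := inv_app l32 (l32_0 h32)
lemma l32i_1 (h32 : IsLambda 2 1 l32) : l32⁻¹ f1 = f1 := inv_app l32 (l32_1 h32)
lemma l32i_2 (h32 : IsLambda 2 1 l32) : l32⁻¹ f2 = f1⁻¹ * f2 := by
  refine inv_app l32 ?_
  rw [map_mul, map_inv, l32_1 h32, l32_2 h32]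
  group
lemma l21i_0 (h21 : IsLambda 1 0 l21) : l21⁻¹ f0 = f0 := inv_app l21 (l21_0 h21)
lemma l21i_1 (h21 : IsLambda 1 0 l21) : l21⁻¹ f1 = f0⁻¹ * f1 := by
  refine inv_app l21 ?_
  rw [map_mul, map_inv, l21_0 h21, l21_1 h21]
  group
lemma l21i_2 (h21 : IsLambda 1 0 l21) : l21⁻¹ f2 = f2 := inv_app l21 (l21_2 h21)

/-- the automorphism `λ₃₁ = l32⁻¹ ⬝ ⁅l21, l32⁆ ⬝ l32`, sending `f2 ↦ f0 f2`. -/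
def lam31 (l32 l21 : MulAut (FreeGroup (Fin 3))) : MulAut (FreeGroup (Fin 3)) :=
  l32⁻¹ * (l21 * l32 * l21⁻¹ * l32⁻¹) * l32

variable (h32 : IsLambda 2 1 l32) (h21 : IsLambda 1 0 l21)
include h32 h21

lemma lam31_0 : lam31 l32 l21 f0 = f0 := by
  simp only [lam31, MulAut.mul_apply, l32_0 h32, l32i_0 h32, l21_0 h21, l21i_0 h21]

lemma lam31_1 : lam31 l32 l21 f1 = f1 := by
  simp only [lam31, MulAut.mul_apply, l32_1 h32, l32i_1 h32, map_mul, map_inv,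
    l21_1 h21, l21i_1 h21, l21_0 h21, l21i_0 h21, l32_0 h32, l32i_0 h32]
  group

lemma lam31_2 : lam31 l32 l21 f2 = f0 * f2 := by
  simp only [lam31, MulAut.mul_apply, l32_2 h32, map_mul, map_inv,
    l32i_2 h32, l32i_1 h32, l21i_1 h21, l21i_2 h21, l21_0 h21, l21_1 h21, l21_2 h21,
    l32_0 h32, l32_1 h32, l32i_0 h32, l21i_0 h21]
  group

lemma lam31i_0 : (lam31 l32 l21)⁻¹ f0 = f0 := inv_app _ (lam31_0 h32 h21)
lemma lam31i_1 : (lam31 l32 l21)⁻¹ f1 = f1 := inv_app _ (lam31_1 h32 h21)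
lemma lam31i_2 : (lam31 l32 l21)⁻¹ f2 = f0⁻¹ * f2 := by
  refine inv_app _ ?_
  rw [map_mul, map_inv, lam31_0 h32 h21, lam31_2 h32 h21]
  group

end Uside

end UT3
namespace UT3

section Main

variable {U : Subgroup (MulAut (FreeGroup (Fin 3)))}
  {l32 l21 : MulAut (FreeGroup (Fin 3))}

lemma mem31 (m32 : l32 ∈ U) (m21 : l21 ∈ U) : lam31 l32 l21 ∈ U := by
  refine U.mul_mem (U.mul_mem (U.inv_mem m32) ?_) m32
  exact U.mul_mem (U.mul_mem (U.mul_mem m21 m32) (U.inv_mem m21)) (U.inv_mem m32)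

/-- the homomorphism F →* U, x ↦ λ₃₁⁻¹, y ↦ l32⁻¹ -/
def LamU (m32 : l32 ∈ U) (m21 : l21 ∈ U) : F →* U :=
  FreeGroup.lift (fun t => if t then (⟨l32, m32⟩ : U)⁻¹
    else (⟨lam31 l32 l21, mem31 m32 m21⟩ : U)⁻¹)

variable (m32 : l32 ∈ U) (m21 : l21 ∈ U)

lemma LamU_y : LamU m32 m21 yy = (⟨l32, m32⟩ : U)⁻¹ := by simp [LamU, yy]
lemma LamU_x : LamU m32 m21 xx = (⟨lam31 l32 l21, mem31 m32 m21⟩ : U)⁻¹ := by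
  simp [LamU, xx]

lemma LamU_val_y : ((LamU m32 m21 yy : U) : MulAut M) = l32⁻¹ := by rw [LamU_y]; rfl
lemma LamU_val_x : ((LamU m32 m21 xx : U) : MulAut M) = (lam31 l32 l21)⁻¹ := by
  rw [LamU_x]; rfl

lemma fix_iota {φ : MulAut M} (hf0 : φ f0 = f0) (hf1 : φ f1 = f1) (w : F) :
    φ (iot w) = iot w := by
  have h : (φ.toMonoidHom).comp iot = iot := by
    apply FreeGroup.ext_hom
    intro t
    cases t
    · show φ (iot xx) = iot xx
      rw [iot_x]; exact hf0
    · show φ (iot yy) = iot yy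
      rw [iot_y]; exact hf1
  exact DFunLike.congr_fun h w

variable (h32 : IsLambda 2 1 l32) (h21 : IsLambda 1 0 l21)
include h32 h21

lemma LamU_fix : ∀ w : F,
    ((LamU m32 m21 w : U) : MulAut M) f0 = f0 ∧ ((LamU m32 m21 w : U) : MulAut M) f1 = f1 := by
  intro w
  induction w using FreeGroup.induction_on with
  | C1 => simp
  | of t =>
    cases t
    · rw [show (FreeGroup.of false : F) = xx from rfl, LamU_val_x]
      exact ⟨lam31i_0 h32 h21, lam31i_1 h32 h21⟩
    · rw [show (FreeGroup.of true : F) = yy from rfl, LamU_val_y]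
      exact ⟨l32i_0 h32, l32i_1 h32⟩
  | inv_of t ih =>
    rw [map_inv]
    have h0 := ih.1
    have h1 := ih.2
    constructor
    · exact inv_app _ h0
    · exact inv_app _ h1
  | mul u v ihu ihv =>
    rw [map_mul]
    constructor
    · show ((LamU m32 m21 u : U) : MulAut M) (((LamU m32 m21 v : U) : MulAut M) f0) = f0
      rw [ihv.1, ihu.1]
    · show ((LamU m32 m21 u : U) : MulAut M) (((LamU m32 m21 v : U) : MulAut M) f1) = f1
      rw [ihv.2, ihu.2]

lemma LamU_f2 : ∀ w : F,
    ((LamU m32 m21 w : U) : MulAut M) f2 = (iot w)⁻¹ * f2 := by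
  intro w
  induction w using FreeGroup.induction_on with
  | C1 => simp
  | of t =>
    cases t
    · rw [show (FreeGroup.of false : F) = xx from rfl, LamU_val_x, iot_x]
      exact lam31i_2 h32 h21
    · rw [show (FreeGroup.of true : F) = yy from rfl, LamU_val_y, iot_y]
      exact l32i_2 h32
  | inv_of t ih =>
    rw [map_inv]
    rw [show ((LamU m32 m21 (FreeGroup.of t))⁻¹ : U).val = ((LamU m32 m21 (FreeGroup.of t) : U) : MulAut M)⁻¹
      from rfl]
    refine inv_app _ ?_
    have hfix := LamU_fix m32 m21 h32 h21 (FreeGroup.of t)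
    rw [show ((iot ((FreeGroup.of t : F)⁻¹))⁻¹ : M) = iot (FreeGroup.of t) by rw [map_inv, inv_inv]]
    rw [map_mul, fix_iota hfix.1 hfix.2, ih]
    group
  | mul u v ihu ihv =>
    rw [map_mul, map_mul]
    rw [show ((LamU m32 m21 u * LamU m32 m21 v : U) : MulAut M)
        = ((LamU m32 m21 u : U) : MulAut M) * ((LamU m32 m21 v : U) : MulAut M) from rfl,
      MulAut.mul_apply]
    have hfixu := LamU_fix m32 m21 h32 h21 u
    rw [ihv, map_mul, map_inv, fix_iota hfixu.1 hfixu.2, ihu]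
    group

end Main

end UT3
namespace UT3

section Main2

variable {U : Subgroup (MulAut (FreeGroup (Fin 3)))}
  {l32 l21 : MulAut (FreeGroup (Fin 3))}

lemma autext3 {φ ψ : MulAut M} (H0 : φ f0 = ψ f0) (H1 : φ f1 = ψ f1)
    (H2 : φ f2 = ψ f2) : φ = ψ := by
  apply autext
  intro i
  fin_cases i
  exacts [H0, H1, H2]

variable (m32 : l32 ∈ U) (m21 : l21 ∈ U)
  (h32 : IsLambda 2 1 l32) (h21 : IsLambda 1 0 l21)
include h32 h21

lemma Q1U (w : F) :
    LamU m32 m21 (beta w) = (⟨l21, m21⟩ : U) * LamU m32 m21 w * (⟨l21, m21⟩ : U)⁻¹ := by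
  have h : (LamU m32 m21).comp beta.toMonoidHom
      = (MulAut.conj (⟨l21, m21⟩ : U)).toMonoidHom.comp (LamU m32 m21) := by
    apply FreeGroup.ext_hom
    intro t
    cases t
    · show LamU m32 m21 (beta xx) = MulAut.conj (⟨l21, m21⟩ : U) (LamU m32 m21 xx)
      rw [beta_x, MulAut.conj_apply, LamU_x]
      apply Subtype.ext
      show (lam31 l32 l21)⁻¹ = l21 * (lam31 l32 l21)⁻¹ * l21⁻¹
      refine autext3 ?_ ?_ ?_ <;>
      · simp only [MulAut.mul_apply, map_mul, map_inv,
          l21_0 h21, l21_1 h21, l21_2 h21, l21i_0 h21, l21i_1 h21, l21i_2 h21,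
          lam31i_0 h32 h21, lam31i_1 h32 h21, lam31i_2 h32 h21]
        try group
    · show LamU m32 m21 (beta yy) = MulAut.conj (⟨l21, m21⟩ : U) (LamU m32 m21 yy)
      rw [beta_y, MulAut.conj_apply, map_mul, LamU_x, LamU_y]
      apply Subtype.ext
      show (lam31 l32 l21)⁻¹ * l32⁻¹ = l21 * l32⁻¹ * l21⁻¹
      refine autext3 ?_ ?_ ?_ <;>
      · simp only [MulAut.mul_apply, map_mul, map_inv,
          l21_0 h21, l21_1 h21, l21_2 h21, l21i_0 h21, l21i_1 h21, l21i_2 h21,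
          l32i_0 h32, l32i_1 h32, l32i_2 h32,
          lam31i_0 h32 h21, lam31i_1 h32 h21, lam31i_2 h32 h21]
        try group
  exact DFunLike.congr_fun h w

lemma Q1U' (w : F) :
    LamU m32 m21 (beta⁻¹ w) = (⟨l21, m21⟩ : U)⁻¹ * LamU m32 m21 w * (⟨l21, m21⟩ : U) := by
  have := Q1U m32 m21 h32 h21 (beta⁻¹ w)
  have h2 : beta ((beta⁻¹ : MulAut F) w) = w := by
    rw [beta_inv_eq]; exact beta.apply_symm_apply w
  rw [h2] at this
  rw [this]; group

lemma QnU (n : ℤ) : ∀ w : F,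
    LamU m32 m21 ((beta ^ n : MulAut F) w)
      = (⟨l21, m21⟩ : U) ^ n * LamU m32 m21 w * ((⟨l21, m21⟩ : U) ^ n)⁻¹ := by
  induction n using Int.induction_on with
  | zero => intro w; simp
  | succ k ih =>
    intro w
    have hsplit : (beta ^ ((k : ℤ) + 1) : MulAut F) w
        = (beta ^ (k : ℤ) : MulAut F) (beta w) := by
      rw [zpow_add_one]; rfl
    rw [hsplit, ih (beta w), Q1U m32 m21 h32 h21, zpow_add_one]
    group
  | pred k ih =>
    intro w
    have hsplit : (beta ^ (-(k : ℤ) - 1) : MulAut F) w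
        = (beta ^ (-(k : ℤ)) : MulAut F) (beta⁻¹ w) := by
      rw [zpow_sub_one]; rfl
    rw [hsplit, ih (beta⁻¹ w), Q1U' m32 m21 h32 h21, zpow_sub_one]
    group

lemma compatU : ∀ m : Multiplicative ℤ,
    (LamU m32 m21).comp (phiK m).toMonoidHom
      = (MulAut.conj (zpowersHom U (⟨l21, m21⟩ : U) m)).toMonoidHom.comp (LamU m32 m21) := by
  intro m
  apply MonoidHom.ext
  intro w
  show LamU m32 m21 (phiK m w) = MulAut.conj (zpowersHom U (⟨l21, m21⟩ : U) m) (LamU m32 m21 w)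
  rw [MulAut.conj_apply]
  exact QnU m32 m21 h32 h21 m.toAdd w

/-- the homomorphism K →* U -/
def PhiK : K →* U :=
  SemidirectProduct.lift (LamU m32 m21) (zpowersHom U (⟨l21, m21⟩ : U))
    (compatU m32 m21 h32 h21)

end Main2

end UT3
namespace UT3

section Main3

variable {U : Subgroup (MulAut (FreeGroup (Fin 3)))}
  {l32 l21 : MulAut (FreeGroup (Fin 3))}

lemma l21zp (h21 : IsLambda 1 0 l21) (n : ℤ) :
    (l21 ^ n : MulAut M) f0 = f0 ∧ (l21 ^ n : MulAut M) f1 = f0 ^ n * f1 ∧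
      (l21 ^ n : MulAut M) f2 = f2 := by
  induction n using Int.induction_on with
  | zero => simp
  | succ k ih =>
    have hs : (l21 ^ ((k : ℤ) + 1) : MulAut M) = l21 ^ (k : ℤ) * l21 := zpow_add_one l21 k
    rw [hs]
    refine ⟨?_, ?_, ?_⟩
    · rw [MulAut.mul_apply, l21_0 h21, ih.1]
    · rw [MulAut.mul_apply, l21_1 h21, map_mul, ih.1, ih.2.1]
      rw [show f0 * (f0 ^ (k : ℤ) * f1) = f0 ^ ((k : ℤ) + 1) * f1 by group]
    · rw [MulAut.mul_apply, l21_2 h21, ih.2.2]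
  | pred k ih =>
    have hs : (l21 ^ (-(k : ℤ) - 1) : MulAut M) = l21 ^ (-(k : ℤ)) * l21⁻¹ :=
      zpow_sub_one l21 _
    rw [hs]
    refine ⟨?_, ?_, ?_⟩
    · rw [MulAut.mul_apply, l21i_0 h21, ih.1]
    · rw [MulAut.mul_apply, l21i_1 h21, map_mul, map_inv, ih.1, ih.2.1]
      rw [show f0⁻¹ * (f0 ^ (-(k : ℤ)) * f1) = f0 ^ (-(k : ℤ) - 1) * f1 by group]
    · rw [MulAut.mul_apply, l21i_2 h21, ih.2.2]

def eps : M →* Multiplicative ℤ :=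
  FreeGroup.lift (fun i => if i = 0 then Multiplicative.ofAdd (1 : ℤ) else 1)

lemma f0_zpow_eq_one {n : ℤ} (h : f0 ^ n = 1) : n = 0 := by
  have h2 := congrArg eps h
  rw [map_zpow, map_one] at h2
  have h3 : eps f0 = Multiplicative.ofAdd (1 : ℤ) := by simp [eps, f0]
  rw [h3] at h2
  have h4 := congrArg Multiplicative.toAdd h2
  simpa using h4

lemma lowerGens0 : lowerGens (0 : Fin 3) = ∅ := by
  ext g
  simp only [lowerGens, Set.mem_setOf_eq, Set.mem_empty_iff_false, iff_false, not_exists]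
  intro j hj
  exact absurd hj.1 (by omega)

lemma lowerGens1 : lowerGens (1 : Fin 3) = {f0} := by
  ext g
  simp only [lowerGens, Set.mem_setOf_eq, Set.mem_singleton_iff]
  constructor
  · rintro ⟨j, hj, rfl⟩
    have : j = 0 := by omega
    rw [this]; rfl
  · rintro rfl
    exact ⟨0, by omega, rfl⟩

lemma lowerGens2 : lowerGens (2 : Fin 3) = {f0, f1} := by
  ext g
  simp only [lowerGens, Set.mem_setOf_eq, Set.mem_insert_iff, Set.mem_singleton_iff]
  constructor
  · rintro ⟨j, hj, rfl⟩
    have : j = 0 ∨ j = 1 := by omega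
    rcases this with rfl | rfl
    · exact Or.inl rfl
    · exact Or.inr rfl
  · rintro (rfl | rfl)
    · exact ⟨0, by omega, rfl⟩
    · exact ⟨1, by omega, rfl⟩

variable (m32 : l32 ∈ U) (m21 : l21 ∈ U)
  (h32 : IsLambda 2 1 l32) (h21 : IsLambda 1 0 l21)

lemma PhiK_inl (w : F) :
    PhiK m32 m21 h32 h21 (SemidirectProduct.inl w) = LamU m32 m21 w := by
  simp [PhiK]

lemma PhiK_inr (m : Multiplicative ℤ) :
    PhiK m32 m21 h32 h21 (SemidirectProduct.inr m) = (⟨l21, m21⟩ : U) ^ m.toAdd := by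
  simp [PhiK, zpowersHom_apply]

lemma PhiK_inj : Function.Injective (PhiK m32 m21 h32 h21) := by
  rw [injective_iff_map_eq_one]
  intro k hk
  rw [← SemidirectProduct.inl_left_mul_inr_right k, map_mul, PhiK_inl, PhiK_inr] at hk
  set w := k.left with hwdef
  set n := Multiplicative.toAdd k.right with hndef
  have hval := congrArg (fun (z : U) => (z : MulAut M)) hk
  simp only [Subgroup.coe_mul, SubgroupClass.coe_zpow, OneMemClass.coe_one] at hval
  -- apply to f1
  have happ1 := congrArg (fun ψ : MulAut M => ψ f1) hval
  simp only [MulAut.mul_apply, MulAut.one_apply] at happ1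
  rw [(l21zp h21 n).2.1, map_mul, map_zpow, (LamU_fix m32 m21 h32 h21 w).1,
    (LamU_fix m32 m21 h32 h21 w).2] at happ1
  have hf0n : f0 ^ n = 1 := by
    have : f0 ^ n * f1 = 1 * f1 := by rw [happ1, one_mul]
    exact mul_right_cancel this
  have hn0 : n = 0 := f0_zpow_eq_one hf0n
  have hright : k.right = 1 := by
    have := congrArg Multiplicative.ofAdd (hndef ▸ hn0 : Multiplicative.toAdd k.right = 0)
    simpa using this
  rw [hn0, zpow_zero, mul_one] at hval
  -- apply to f2
  have happ2 := congrArg (fun ψ : MulAut M => ψ f2) hval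
  simp only [MulAut.one_apply] at happ2
  rw [LamU_f2 m32 m21 h32 h21 w] at happ2
  have hiot : iot w = 1 := by
    have h5 : (iot w)⁻¹ * f2 = 1 * f2 := by rw [happ2, one_mul]
    have h6 := mul_right_cancel h5
    rw [← inv_inv (1 : M)] at h6
    simpa using congrArg (·⁻¹) h6
  have hw1 : w = 1 := by
    apply iot_inj
    rw [hiot, map_one]
  rw [← SemidirectProduct.inl_left_mul_inr_right k, ← hwdef, hw1, hright]
  simp

end Main3

end UT3
/-- `U_3` is isomorphic to the one-relator group `⟨a, b | [[a, b], b] = 1⟩`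
(with `[g, f] = g f g⁻¹ f⁻¹`, which is Mathlib's commutator convention `⁅g, f⁆`),
by an isomorphism sending `a` to `λ_{3,2}` and `b` to `λ_{2,1}`. -/
theorem unitriangular_three_presentation
    (U : Subgroup (MulAut (FreeGroup (Fin 3))))
    (hU : ∀ φ, φ ∈ U ↔ IsUnitriangular φ)
    (l32 l21 : MulAut (FreeGroup (Fin 3)))
    (h32 : IsLambda 2 1 l32) (h21 : IsLambda 1 0 l21)
    (m32 : l32 ∈ U) (m21 : l21 ∈ U) :
    ∃ e : PresentedGroup
        ({⁅⁅FreeGroup.of true, FreeGroup.of false⁆, FreeGroup.of false⁆} :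
          Set (FreeGroup Bool)) ≃* U,
      e (PresentedGroup.of true) = ⟨l32, m32⟩ ∧
      e (PresentedGroup.of false) = ⟨l21, m21⟩ := by
  have hsurj : Function.Surjective (UT3.PhiK m32 m21 h32 h21) := by
    intro φU
    have hUT : IsUnitriangular (φU : MulAut (FreeGroup (Fin 3))) := (hU _).mp φU.2
    obtain ⟨u0, hu0mem, hu0⟩ := hUT 0
    rw [UT3.lowerGens0, Subgroup.closure_empty, Subgroup.mem_bot] at hu0mem
    have hφ0 : (φU : MulAut (FreeGroup (Fin 3))) UT3.f0 = UT3.f0 := by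
      show (φU : MulAut (FreeGroup (Fin 3))) (FreeGroup.of 0) = FreeGroup.of 0
      rw [hu0, hu0mem, one_mul]
    obtain ⟨u1, hu1mem, hu1⟩ := hUT 1
    rw [UT3.lowerGens1] at hu1mem
    obtain ⟨n, hn⟩ := Subgroup.mem_closure_singleton.mp hu1mem
    obtain ⟨u2, hu2mem, hu2⟩ := hUT 2
    rw [UT3.lowerGens2] at hu2mem
    have hle : Subgroup.closure ({UT3.f0, UT3.f1} : Set (FreeGroup (Fin 3)))
        ≤ UT3.iot.range := by
      rw [Subgroup.closure_le]
      rintro g (rfl | rfl)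
      · exact ⟨UT3.xx, UT3.iot_x⟩
      · exact ⟨UT3.yy, UT3.iot_y⟩
    obtain ⟨w0, hw0⟩ := hle hu2mem
    refine ⟨SemidirectProduct.inl w0⁻¹ * SemidirectProduct.inr (Multiplicative.ofAdd n), ?_⟩
    rw [map_mul, UT3.PhiK_inl, UT3.PhiK_inr]
    apply Subtype.ext
    rw [Subgroup.coe_mul, SubgroupClass.coe_zpow]
    simp only [toAdd_ofAdd]
    refine UT3.autext3 ?_ ?_ ?_
    · rw [MulAut.mul_apply, (UT3.l21zp h21 n).1, (UT3.LamU_fix m32 m21 h32 h21 w0⁻¹).1]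
      exact hφ0.symm
    · rw [MulAut.mul_apply, (UT3.l21zp h21 n).2.1, map_mul, map_zpow,
        (UT3.LamU_fix m32 m21 h32 h21 w0⁻¹).1, (UT3.LamU_fix m32 m21 h32 h21 w0⁻¹).2]
      show UT3.f0 ^ n * UT3.f1 = (φU : MulAut (FreeGroup (Fin 3))) (FreeGroup.of 1)
      rw [hu1, ← hn]
      rfl
    · rw [MulAut.mul_apply, (UT3.l21zp h21 n).2.2, UT3.LamU_f2 m32 m21 h32 h21,
        map_inv, inv_inv, hw0]
      show u2 * UT3.f2 = (φU : MulAut (FreeGroup (Fin 3))) (FreeGroup.of 2)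
      rw [hu2]
      rfl
  have hinj := UT3.PhiK_inj m32 m21 h32 h21
  refine ⟨UT3.e1.trans (MulEquiv.ofBijective _ ⟨hinj, hsurj⟩), ?_, ?_⟩
  · rw [MulEquiv.trans_apply]
    rw [show UT3.e1 (PresentedGroup.of true) = UT3.AA from UT3.e1_a]
    show UT3.PhiK m32 m21 h32 h21 UT3.AA = ⟨l32, m32⟩
    rw [show UT3.AA = SemidirectProduct.inl UT3.yy⁻¹ from rfl, UT3.PhiK_inl, map_inv,
      UT3.LamU_y, inv_inv]
  · rw [MulEquiv.trans_apply]
    rw [show UT3.e1 (PresentedGroup.of false) = UT3.BB from UT3.e1_b]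
    show UT3.PhiK m32 m21 h32 h21 UT3.BB = ⟨l21, m21⟩
    rw [show UT3.BB = SemidirectProduct.inr (Multiplicative.ofAdd 1) from rfl, UT3.PhiK_inr]
    simp
end
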